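/- For every grouplike element g ∈ H and every h ∈ H one has g·h·g⁻¹ = σ(h₁ ⊗ g)·h₂·σ⁻¹(h₃ ⊗ g); in particular, the inner automorphism of H induced by a grouplike element is co-inner. -/

import Mathlib

open TensorProduct Coalgebra HopfAlgebra

variable {k H : Type*} [Field k] [Ring H] [HopfAlgebra k H]

/-- The antipode of `H`, as a linear map. -/
local notation "𝐒" => HopfAlgebra.antipode (R := k)

/-- Convolution product on the dual of `H`: `(conv f g) h = f h₁ * g h₂`. -/
noncomputable def conv (f g : H →ₗ[k] k) : H →ₗ[k] k :=
  (LinearMap.mul' k k) ∘ₗ (TensorProduct.map f g) ∘ₗ (Coalgebra.comul (R := k))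

/-- `h ↦ f h₁ • h₂`. -/
noncomputable def lT (f : H →ₗ[k] k) : H →ₗ[k] H :=
  (TensorProduct.lid k H).toLinearMap ∘ₗ (f.rTensor H) ∘ₗ (Coalgebra.comul (R := k))

/-- The Sweedler sum `h ↦ f h₁ • p h₃ • g h₂`. -/
noncomputable def sw3 (f : H →ₗ[k] k) (g : H →ₗ[k] H) (p : H →ₗ[k] k) : H →ₗ[k] H :=
  (TensorProduct.lid k H).toLinearMap
    ∘ₗ (TensorProduct.rid k (k ⊗[k] H)).toLinearMap
    ∘ₗ (TensorProduct.map (TensorProduct.map f g) p)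
    ∘ₗ ((Coalgebra.comul (R := k)).rTensor H)
    ∘ₗ (Coalgebra.comul (R := k))

/-- `χ(h) = α(h₂) • S⁻²(h₁)`, the generalized Nakayama automorphism. -/
noncomputable def chiMap (Sinv : H →ₗ[k] H) (f : H →ₗ[k] k) : H →ₗ[k] H :=
  (TensorProduct.rid k H).toLinearMap
    ∘ₗ (TensorProduct.map (Sinv ∘ₗ Sinv) f)
    ∘ₗ (Coalgebra.comul (R := k))

/-- `f(R¹) • R²` for `R = R¹ ⊗ R² ∈ H ⊗ H`. -/
noncomputable def lap (f : H →ₗ[k] k) : (H ⊗[k] H) →ₗ[k] H :=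
  (TensorProduct.lid k H).toLinearMap ∘ₗ (f.rTensor H)

/-- `f(R²) • R¹` for `R = R¹ ⊗ R² ∈ H ⊗ H`. -/
noncomputable def rap (f : H →ₗ[k] k) : (H ⊗[k] H) →ₗ[k] H :=
  (TensorProduct.rid k H).toLinearMap ∘ₗ (LinearMap.lTensor H f)

/-- The Drinfeld element `u = S(R²)R¹`. -/
noncomputable def uElt (Rm : H ⊗[k] H) : H :=
  (LinearMap.mul' k H)
    ((TensorProduct.comm k H H)
      ((LinearMap.lTensor H (HopfAlgebra.antipode (R := k))) Rm))

/-- Convolution product on the dual of `H ⊗ H`. -/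
noncomputable def conv2 (f g : (H ⊗[k] H) →ₗ[k] k) : (H ⊗[k] H) →ₗ[k] k :=
  (LinearMap.mul' k k) ∘ₗ (TensorProduct.map f g) ∘ₗ (Coalgebra.comul (R := k) (A := H ⊗[k] H))

/-- `(h ⊗ l) ↦ σ(h₂ ⊗ l₂) • (l₁ * h₁)`. -/
noncomputable def ac1 (σ : (H ⊗[k] H) →ₗ[k] k) : (H ⊗[k] H) →ₗ[k] H :=
  (TensorProduct.rid k H).toLinearMap
    ∘ₗ (TensorProduct.map ((LinearMap.mul' k H) ∘ₗ (TensorProduct.comm k H H).toLinearMap) σ)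
    ∘ₗ (TensorProduct.tensorTensorTensorComm k H H H H).toLinearMap
    ∘ₗ (TensorProduct.map (Coalgebra.comul (R := k)) (Coalgebra.comul (R := k)))

/-- `(h ⊗ l) ↦ σ(h₁ ⊗ l₁) • (h₂ * l₂)`. -/
noncomputable def ac2 (σ : (H ⊗[k] H) →ₗ[k] k) : (H ⊗[k] H) →ₗ[k] H :=
  (TensorProduct.lid k H).toLinearMap
    ∘ₗ (TensorProduct.map σ (LinearMap.mul' k H))
    ∘ₗ (TensorProduct.tensorTensorTensorComm k H H H H).toLinearMap
    ∘ₗ (TensorProduct.map (Coalgebra.comul (R := k)) (Coalgebra.comul (R := k)))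

/-- `(h ⊗ l) ↦ ρ(h₁ ⊗ l₁) * lam(h₂ * l₂) * τ(h₃ ⊗ l₃)`. -/
noncomputable def trip (lam : H →ₗ[k] k) (ρ τ : (H ⊗[k] H) →ₗ[k] k) : (H ⊗[k] H) →ₗ[k] k :=
  (LinearMap.mul' k k)
    ∘ₗ ((LinearMap.mul' k k).rTensor k)
    ∘ₗ (TensorProduct.map (TensorProduct.map ρ (lam ∘ₗ (LinearMap.mul' k H))) τ)
    ∘ₗ ((TensorProduct.tensorTensorTensorComm k H H H H).toLinearMap.rTensor (H ⊗[k] H))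
    ∘ₗ (TensorProduct.tensorTensorTensorComm k (H ⊗[k] H) H (H ⊗[k] H) H).toLinearMap
    ∘ₗ (TensorProduct.map
          (((Coalgebra.comul (R := k)).rTensor H) ∘ₗ (Coalgebra.comul (R := k)))
          (((Coalgebra.comul (R := k)).rTensor H) ∘ₗ (Coalgebra.comul (R := k))))

/-- `u(h) = σ(h₂ ⊗ S h₁)`. -/
noncomputable def uF (σ : (H ⊗[k] H) →ₗ[k] k) : H →ₗ[k] k :=
  σ ∘ₗ (TensorProduct.comm k H H).toLinearMap
    ∘ₗ ((HopfAlgebra.antipode (R := k)).rTensor H) ∘ₗ (Coalgebra.comul (R := k))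

/-- `v(h) = σ(h₁ ⊗ S h₂)`. -/
noncomputable def vF (σ : (H ⊗[k] H) →ₗ[k] k) : H →ₗ[k] k :=
  σ ∘ₗ (LinearMap.lTensor H (HopfAlgebra.antipode (R := k))) ∘ₗ (Coalgebra.comul (R := k))

/-- `u⁻¹(h) = σ(S²(h₂) ⊗ h₁)`. -/
noncomputable def uinvF (σ : (H ⊗[k] H) →ₗ[k] k) : H →ₗ[k] k :=
  σ ∘ₗ (((HopfAlgebra.antipode (R := k)) ∘ₗ (HopfAlgebra.antipode (R := k))).rTensor H)
    ∘ₗ (TensorProduct.comm k H H).toLinearMap ∘ₗ (Coalgebra.comul (R := k))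

/-- `v⁻¹(h) = σ(S²(h₁) ⊗ h₂)`. -/
noncomputable def vinvF (σ : (H ⊗[k] H) →ₗ[k] k) : H →ₗ[k] k :=
  σ ∘ₗ (((HopfAlgebra.antipode (R := k)) ∘ₗ (HopfAlgebra.antipode (R := k))).rTensor H)
    ∘ₗ (Coalgebra.comul (R := k))

set_option maxHeartbeats 1000000 in
set_option synthInstance.maxHeartbeats 400000 in
/-- In an almost commutative Hopf algebra $(H,σ)$, the inner automorphism
induced by a grouplike $g$ is co-inner: $g h g^{-1} = σ(h_1 ⊗ g) h_2 σ^{-1}(h_3 ⊗ g)$. -/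
theorem inner_of_grouplike_is_coinner
    (σ σ' : (H ⊗[k] H) →ₗ[k] k)
    (hσinv_r : conv2 σ σ' = Coalgebra.counit (R := k) (A := H ⊗[k] H))
    (hσinv_l : conv2 σ' σ = Coalgebra.counit (R := k) (A := H ⊗[k] H))
    (hσ4 : ∀ h l : H, ac1 σ (h ⊗ₜ[k] l) = ac2 σ (h ⊗ₜ[k] l)) :
    ∀ g : H, g ≠ 0 → Coalgebra.comul (R := k) g = g ⊗ₜ[k] g →
      ∀ h : H, g * h * 𝐒 g =
        sw3 (σ ∘ₗ ((TensorProduct.mk k H H).flip g)) LinearMap.id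
          (σ' ∘ₗ ((TensorProduct.mk k H H).flip g)) h := by

  intro g hg0 hΔg h
  -- ε(g) = 1
  have hεg : Coalgebra.counit (R := k) g = (1 : k) := by
    have h1 := Coalgebra.rTensor_counit_comul (R := k) g
    rw [hΔg, LinearMap.rTensor_tmul] at h1
    have h2 := congrArg (TensorProduct.lid k H) h1
    simp only [TensorProduct.lid_tmul, one_smul] at h2
    have h3 : (Coalgebra.counit (R := k) g - 1) • g = 0 := by
      rw [sub_smul, one_smul, h2, sub_self]
    rcases smul_eq_zero.mp h3 with h4 | h4
    · exact sub_eq_zero.mp h4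
    · exact absurd h4 hg0
  -- g * S g = 1
  have hgS : g * 𝐒 g = 1 := by
    have h1 := HopfAlgebra.mul_antipode_lTensor_comul_apply (R := k) g
    rw [hΔg, LinearMap.lTensor_tmul, LinearMap.mul'_apply, hεg, map_one] at h1
    exact h1
  set f : H →ₗ[k] k := σ ∘ₗ ((TensorProduct.mk k H H).flip g) with hfdef
  set f' : H →ₗ[k] k := σ' ∘ₗ ((TensorProduct.mk k H H).flip g) with hf'def
  have hf : ∀ x : H, f x = σ (x ⊗ₜ[k] g) := fun x => rfl
  have hf' : ∀ x : H, f' x = σ' (x ⊗ₜ[k] g) := fun x => rfl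
  -- counit is the convolution of f and f'
  have hconv : ∀ (x : H) (r : Coalgebra.Repr k x (H × H)),
      Coalgebra.counit (R := k) x = ∑ i ∈ r.index, f (r.left i) * f' (r.right i) := by
    intro x r
    have h1 := LinearMap.congr_fun hσinv_r (x ⊗ₜ[k] g)
    simp only [conv2, LinearMap.comp_apply, TensorProduct.comul_tmul,
      TensorProduct.counit_tmul, LinearEquiv.coe_coe,
      TensorProduct.map_tmul] at h1
    rw [hΔg, ← r.eq] at h1
    simp only [TensorProduct.sum_tmul, map_sum, TensorProduct.tensorTensorTensorComm_tmul,
      TensorProduct.map_tmul, LinearMap.mul'_apply, hεg, mul_one, one_smul, TensorProduct.AlgebraTensorModule.tensorTensorTensorComm_tmul] at h1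
    rw [← h1]
    exact Finset.sum_congr rfl fun i _ => by rw [hf, hf']
  -- the almost-commutativity relation, elementwise
  have hrel : ∀ (x : H) (r : Coalgebra.Repr k x (H × H)),
      ∑ i ∈ r.index, f (r.right i) • (g * r.left i) =
      ∑ i ∈ r.index, f (r.left i) • (r.right i * g) := by
    intro x r
    have h1 := hσ4 x g
    simp only [ac1, ac2, LinearMap.comp_apply, LinearEquiv.coe_coe,
      TensorProduct.map_tmul] at h1
    rw [hΔg, ← r.eq] at h1
    simp only [TensorProduct.sum_tmul, map_sum, TensorProduct.tensorTensorTensorComm_tmul,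
      TensorProduct.map_tmul, TensorProduct.comm_tmul, LinearMap.mul'_apply,
      TensorProduct.rid_tmul, TensorProduct.lid_tmul] at h1
    calc ∑ i ∈ r.index, f (r.right i) • (g * r.left i)
        = ∑ i ∈ r.index, σ (r.right i ⊗ₜ[k] g) • (g * r.left i) :=
          Finset.sum_congr rfl fun i _ => by rw [hf]
      _ = ∑ i ∈ r.index, σ (r.left i ⊗ₜ[k] g) • (r.right i * g) := h1
      _ = ∑ i ∈ r.index, f (r.left i) • (r.right i * g) :=
          Finset.sum_congr rfl fun i _ => by rw [hf]
  -- representations of the iterated coproduct of h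
  set r : Coalgebra.Repr k h (H × H) := Coalgebra.Repr.arbitrary k h with hrdef
  set r1 : (i : H × H) → Coalgebra.Repr k (r.left i) (H × H) :=
    fun i => Coalgebra.Repr.arbitrary k (r.left i) with hr1def
  set r2 : (i : H × H) → Coalgebra.Repr k (r.right i) (H × H) :=
    fun i => Coalgebra.Repr.arbitrary k (r.right i) with hr2def
  -- the right-hand side
  have hRHS : sw3 f LinearMap.id f' h =
      ∑ i ∈ r.index, ∑ j ∈ (r1 i).index,
        (f ((r1 i).left j) * f' (r.right i)) • (r1 i).right j := by
    simp only [sw3, LinearMap.comp_apply, LinearEquiv.coe_coe]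
    rw [← r.eq]
    simp only [map_sum, LinearMap.rTensor_tmul]
    refine Finset.sum_congr rfl fun i _ => ?_
    rw [← (r1 i).eq]
    simp only [TensorProduct.sum_tmul, map_sum, TensorProduct.map_tmul,
      TensorProduct.rid_tmul, LinearMap.id_apply]
    refine Finset.sum_congr rfl fun j _ => ?_
    rw [TensorProduct.smul_tmul', TensorProduct.lid_tmul, smul_eq_mul, mul_comm]
  -- the left-hand side
  have hh : h = ∑ i ∈ r.index, Coalgebra.counit (R := k) (r.right i) • r.left i := by
    have h1 := Coalgebra.sum_tmul_counit_eq (R := k) r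
    have h2 : (TensorProduct.rid k H).toLinearMap
          (∑ i ∈ r.index, r.left i ⊗ₜ[k] Coalgebra.counit (R := k) (r.right i)) =
        (TensorProduct.rid k H).toLinearMap (h ⊗ₜ[k] 1) := by rw [h1]
    simp only [map_sum, LinearEquiv.coe_coe, TensorProduct.rid_tmul, one_smul] at h2
    exact h2.symm
  have hLHS : g * h * 𝐒 g =
      ∑ i ∈ r.index, ∑ j ∈ (r2 i).index,
        (f ((r2 i).left j) * f' ((r2 i).right j)) • (g * r.left i * 𝐒 g) := by
    calc g * h * 𝐒 g
        = ∑ i ∈ r.index, Coalgebra.counit (R := k) (r.right i) • (g * r.left i * 𝐒 g) := by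
          conv_lhs => rw [hh]
          rw [Finset.mul_sum, Finset.sum_mul]
          exact Finset.sum_congr rfl fun i _ => by
            rw [mul_smul_comm, smul_mul_assoc]
      _ = ∑ i ∈ r.index, ∑ j ∈ (r2 i).index,
            (f ((r2 i).left j) * f' ((r2 i).right j)) • (g * r.left i * 𝐒 g) := by
          refine Finset.sum_congr rfl fun i _ => ?_
          rw [hconv (r.right i) (r2 i), Finset.sum_smul]
  -- transfer along coassociativity
  have hψ : ∑ i ∈ r.index, ∑ j ∈ (r1 i).index,
        (f ((r1 i).right j) * f' (r.right i)) • (g * (r1 i).left j * 𝐒 g) =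
      ∑ i ∈ r.index, ∑ j ∈ (r2 i).index,
        (f ((r2 i).left j) * f' ((r2 i).right j)) • (g * r.left i * 𝐒 g) := by
    have h1 := Coalgebra.sum_tmul_tmul_eq (R := k) r r1 r2
    set Ψ : H ⊗[k] (H ⊗[k] H) →ₗ[k] H :=
      (TensorProduct.rid k H).toLinearMap
        ∘ₗ (TensorProduct.map
              ((LinearMap.mulRight k (𝐒 g)) ∘ₗ (LinearMap.mulLeft k g))
              ((LinearMap.mul' k k) ∘ₗ (TensorProduct.map f f'))) with hΨdef
    have h2 := congrArg Ψ h1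
    simpa only [hΨdef, map_sum, LinearMap.comp_apply, LinearEquiv.coe_coe,
      TensorProduct.map_tmul, TensorProduct.rid_tmul, LinearMap.mul'_apply,
      LinearMap.mulLeft_apply, LinearMap.mulRight_apply] using h2
  rw [hLHS, hRHS, ← hψ]
  refine Finset.sum_congr rfl fun i _ => ?_
  -- use the relation for each i
  have h1 := hrel (r.left i) (r1 i)
  calc ∑ j ∈ (r1 i).index,
        (f ((r1 i).right j) * f' (r.right i)) • (g * (r1 i).left j * 𝐒 g)
      = (∑ j ∈ (r1 i).index, f ((r1 i).right j) • (g * (r1 i).left j)) * (f' (r.right i) • 𝐒 g) := by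
        rw [Finset.sum_mul]
        refine Finset.sum_congr rfl fun j _ => ?_
        rw [smul_mul_assoc, mul_smul_comm, smul_smul, mul_comm]
    _ = (∑ j ∈ (r1 i).index, f ((r1 i).left j) • ((r1 i).right j * g)) * (f' (r.right i) • 𝐒 g) := by
        rw [h1]
    _ = ∑ j ∈ (r1 i).index,
          (f ((r1 i).left j) * f' (r.right i)) • (r1 i).right j := by
        rw [Finset.sum_mul]
        refine Finset.sum_congr rfl fun j _ => ?_
        rw [smul_mul_assoc, mul_smul_comm, smul_smul, mul_assoc, hgS, mul_one]
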